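/- Let S be a tree and let v be a vertex of S of degree two with neighbours u, w. Let T be the tree obtained from S by deleting v and adding a new edge uw. If T is upright, then S is upright. -/
import Mathlib


/-- The edges of `S` with exactly one end in `X`. -/
def cutEdges {V : Type} (S : SimpleGraph V) (X : Set V) : Set (Sym2 V) :=
  {e | e ∈ S.edgeSet ∧ ∃ a b, e = s(a, b) ∧ a ∈ X ∧ b ∉ X}

/-- The edges of `S` joining `A \ B` to `B \ A`. -/
def crossEdges {V : Type} (S : SimpleGraph V) (A B : Set V) : Set (Sym2 V) :=
  {e | e ∈ S.edgeSet ∧ ∃ a b, e = s(a, b) ∧ a ∈ A \ B ∧ b ∈ B \ A}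

/-- A bias in the graph `S`. -/
def IsBias {V : Type} (S : SimpleGraph V) (F : Set (Set V)) : Prop :=
  (∀ A ∈ F, A ≠ ∅ ∧ A ≠ Set.univ) ∧
  (∀ A ∈ F, ∀ B ∈ F, crossEdges S A B = ∅ →
      (A ∩ B ∈ F ∨ A ∩ B = ∅ ∨ A ∩ B = Set.univ) ∧
      (A ∪ B ∈ F ∨ A ∪ B = ∅ ∨ A ∪ B = Set.univ)) ∧
  (∀ A ∈ F, ∀ B ∈ F, (crossEdges S A B).ncard = 1 →
      (A ∩ B ∈ F ∨ A ∩ B = ∅ ∨ A ∩ B = Set.univ) ∨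
      (A ∪ B ∈ F ∨ A ∪ B = ∅ ∨ A ∪ B = Set.univ))

/-- `D` is a directing of `S`: for each edge of `S` exactly one direction is
chosen, and `D` holds only on edges of `S`. -/
def IsDirecting {V : Type} (S : SimpleGraph V) (D : V → V → Prop) : Prop :=
  (∀ a b, D a b → S.Adj a b) ∧ (∀ a b, S.Adj a b → (D a b ↔ ¬ D b a))

/-- Some directed edge leaves `X` (i.e. `D⁺(X) ≠ ∅`). -/
def dirOut {V : Type} (D : V → V → Prop) (X : Set V) : Prop :=
  ∃ a ∈ X, ∃ b, b ∉ X ∧ D a b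

/-- Some directed edge enters `X` (i.e. `D⁻(X) ≠ ∅`). -/
def dirIn {V : Type} (D : V → V → Prop) (X : Set V) : Prop :=
  ∃ a, a ∉ X ∧ ∃ b ∈ X, D a b

/-- A graph `S` is upright if for every bias `F` in `S` with `|D_S(X)| ≥ 2` for
all `X ∈ F`, some directing of `S` has an edge leaving and an edge entering
every member of `F`. -/
def Upright {V : Type} [Fintype V] (S : SimpleGraph V) : Prop :=
  ∀ F : Set (Set V), IsBias S F → (∀ X ∈ F, 2 ≤ (cutEdges S X).ncard) →
    ∃ D : V → V → Prop, IsDirecting S D ∧ ∀ X ∈ F, dirOut D X ∧ dirIn D X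

lemma mem_crossEdges_iff {V : Type} (G : SimpleGraph V) (A B : Set V) (a b : V) :
    s(a, b) ∈ crossEdges G A B ↔
      G.Adj a b ∧ ((a ∈ A \ B ∧ b ∈ B \ A) ∨ (b ∈ A \ B ∧ a ∈ B \ A)) := by
  constructor
  · rintro ⟨he, x, y, hxy, hx, hy⟩
    have hadj : G.Adj a b := he
    rcases Sym2.eq_iff.mp hxy with ⟨rfl, rfl⟩ | ⟨rfl, rfl⟩
    · exact ⟨hadj, Or.inl ⟨hx, hy⟩⟩
    · exact ⟨hadj, Or.inr ⟨hx, hy⟩⟩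
  · rintro ⟨hadj, ⟨hx, hy⟩ | ⟨hx, hy⟩⟩
    · exact ⟨hadj, a, b, rfl, hx, hy⟩
    · exact ⟨hadj, b, a, Sym2.eq_swap, hx, hy⟩

lemma crossEdges_elim {V : Type} {G : SimpleGraph V} {A B : Set V} {e : Sym2 V}
    (he : e ∈ crossEdges G A B) :
    ∃ a b, e = s(a, b) ∧ G.Adj a b ∧ a ∈ A \ B ∧ b ∈ B \ A := by
  obtain ⟨hE, a, b, rfl, ha, hb⟩ := he
  exact ⟨a, b, rfl, hE, ha, hb⟩

lemma crossEdges_eq_empty_iff {V : Type} (G : SimpleGraph V) (A B : Set V) :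
    crossEdges G A B = ∅ ↔ ∀ a b, G.Adj a b → ¬(a ∈ A \ B ∧ b ∈ B \ A) := by
  constructor
  · intro h a b hadj ⟨ha, hb⟩
    have : s(a, b) ∈ crossEdges G A B := ⟨hadj, a, b, rfl, ha, hb⟩
    simp [h] at this
  · intro h
    ext e
    simp only [Set.mem_empty_iff_false, iff_false]
    intro hmem
    obtain ⟨a, b, rfl, hadj, ha, hb⟩ := crossEdges_elim hmem
    exact h a b hadj ⟨ha, hb⟩

lemma crossEdges_comm {V : Type} (G : SimpleGraph V) (A B : Set V) :
    crossEdges G A B = crossEdges G B A := by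
  ext e
  constructor <;>
  · intro he
    obtain ⟨a, b, rfl, hadj, ha, hb⟩ := crossEdges_elim he
    exact ⟨hadj, b, a, Sym2.eq_swap, hb, ha⟩

lemma mem_cutEdges_iff {V : Type} (G : SimpleGraph V) (X : Set V) (a b : V) :
    s(a, b) ∈ cutEdges G X ↔ G.Adj a b ∧ ((a ∈ X ∧ b ∉ X) ∨ (b ∈ X ∧ a ∉ X)) := by
  constructor
  · rintro ⟨he, x, y, hxy, hx, hy⟩
    have hadj : G.Adj a b := he
    rcases Sym2.eq_iff.mp hxy with ⟨rfl, rfl⟩ | ⟨rfl, rfl⟩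
    · exact ⟨hadj, Or.inl ⟨hx, hy⟩⟩
    · exact ⟨hadj, Or.inr ⟨hx, hy⟩⟩
  · rintro ⟨hadj, ⟨hx, hy⟩ | ⟨hx, hy⟩⟩
    · exact ⟨hadj, a, b, rfl, hx, hy⟩
    · exact ⟨hadj, b, a, Sym2.eq_swap, hx, hy⟩

lemma cutEdges_elim {V : Type} {G : SimpleGraph V} {X : Set V} {e : Sym2 V}
    (he : e ∈ cutEdges G X) :
    ∃ a b, e = s(a, b) ∧ G.Adj a b ∧ a ∈ X ∧ b ∉ X := by
  obtain ⟨hE, a, b, rfl, ha, hb⟩ := he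
  exact ⟨a, b, rfl, hE, ha, hb⟩


section biasTauto
variable {vA vB uA uB wA wB : Prop}

lemma bias_tauto1
    (hA : ¬((vA ∧ ¬uA ∧ ¬wA) ∨ (¬vA ∧ uA ∧ wA)))
    (hB : ¬((vB ∧ ¬uB ∧ ¬wB) ∨ (¬vB ∧ uB ∧ wB)))
    (h1 : ¬((uA ∧ ¬uB) ∧ (wB ∧ ¬wA)))
    (h2 : ¬((wA ∧ ¬wB) ∧ (uB ∧ ¬uA))) :
    ¬(((vA ∧ vB) ∧ ¬(uA ∧ uB) ∧ ¬(wA ∧ wB)) ∨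
      (¬(vA ∧ vB) ∧ (uA ∧ uB) ∧ (wA ∧ wB))) := by
  rintro (⟨⟨hvA', hvB'⟩, hnu, hnw⟩ | ⟨hnv, ⟨huA', huB'⟩, hwA', hwB'⟩)
  · by_cases huA : uA
    · have huB : ¬ uB := fun h => hnu ⟨huA, h⟩
      have hwB : wB := by
        by_contra hwB; exact hB (Or.inl ⟨hvB', huB, hwB⟩)
      have hwA : ¬ wA := fun h => hnw ⟨h, hwB⟩
      exact h1 ⟨⟨huA, huB⟩, ⟨hwB, hwA⟩⟩
    · have hwA : wA := by
        by_contra hwA; exact hA (Or.inl ⟨hvA', huA, hwA⟩)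
      have hwB : ¬ wB := fun h => hnw ⟨hwA, h⟩
      have huB : uB := by
        by_contra huB; exact hB (Or.inl ⟨hvB', huB, hwB⟩)
      exact h2 ⟨⟨hwA, hwB⟩, ⟨huB, huA⟩⟩
  · by_cases hvA : vA
    · have hvB : ¬ vB := fun h => hnv ⟨hvA, h⟩
      exact hB (Or.inr ⟨hvB, huB', hwB'⟩)
    · exact hA (Or.inr ⟨hvA, huA', hwA'⟩)

lemma bias_tauto2
    (hA : ¬((vA ∧ ¬uA ∧ ¬wA) ∨ (¬vA ∧ uA ∧ wA)))
    (hB : ¬((vB ∧ ¬uB ∧ ¬wB) ∨ (¬vB ∧ uB ∧ wB)))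
    (h1 : ¬((uA ∧ ¬uB) ∧ (wB ∧ ¬wA)))
    (h2 : ¬((wA ∧ ¬wB) ∧ (uB ∧ ¬uA))) :
    ¬(((vA ∨ vB) ∧ ¬(uA ∨ uB) ∧ ¬(wA ∨ wB)) ∨
      (¬(vA ∨ vB) ∧ (uA ∨ uB) ∧ (wA ∨ wB))) := by
  rintro (⟨hv, hnu, hnw⟩ | ⟨hnv, hus, hws⟩)
  · rcases hv with hvA | hvB
    · exact hA (Or.inl ⟨hvA, fun h => hnu (Or.inl h), fun h => hnw (Or.inl h)⟩)
    · exact hB (Or.inl ⟨hvB, fun h => hnu (Or.inr h), fun h => hnw (Or.inr h)⟩)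
  · have hvA : ¬ vA := fun h => hnv (Or.inl h)
    have hvB : ¬ vB := fun h => hnv (Or.inr h)
    by_cases huA : uA
    · have hwA : ¬ wA := fun h => hA (Or.inr ⟨hvA, huA, h⟩)
      have hwB : wB := by
        rcases hws with h | h
        · exact absurd h hwA
        · exact h
      have huB : ¬ uB := fun h => hB (Or.inr ⟨hvB, h, hwB⟩)
      exact h1 ⟨⟨huA, huB⟩, ⟨hwB, hwA⟩⟩
    · have huB : uB := by
        rcases hus with h | h
        · exact absurd h huA
        · exact h
      have hwB : ¬ wB := fun h => hB (Or.inr ⟨hvB, huB, h⟩)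
      have hwA : wA := by
        rcases hws with h | h
        · exact h
        · exact absurd h hwB
      exact h2 ⟨⟨hwA, hwB⟩, ⟨huB, huA⟩⟩

lemma bias_tauto3
    (hA : ¬((vA ∧ ¬uA ∧ ¬wA) ∨ (¬vA ∧ uA ∧ wA)))
    (hB : ¬((vB ∧ ¬uB ∧ ¬wB) ∨ (¬vB ∧ uB ∧ wB)))
    (h1 : ¬((uA ∧ ¬uB) ∧ (wB ∧ ¬wA)))
    (h2 : ¬((wA ∧ ¬wB) ∧ (uB ∧ ¬uA))) :
    ¬(((vA ∧ ¬vB) ∧ (uB ∧ ¬uA)) ∨ ((uA ∧ ¬uB) ∧ (vB ∧ ¬vA))) := by tauto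

lemma bias_tauto4
    (hA : ¬((vA ∧ ¬uA ∧ ¬wA) ∨ (¬vA ∧ uA ∧ wA)))
    (hB : ¬((vB ∧ ¬uB ∧ ¬wB) ∨ (¬vB ∧ uB ∧ wB)))
    (h1 : ¬((uA ∧ ¬uB) ∧ (wB ∧ ¬wA)))
    (h2 : ¬((wA ∧ ¬wB) ∧ (uB ∧ ¬uA))) :
    ¬(((vA ∧ ¬vB) ∧ (wB ∧ ¬wA)) ∨ ((wA ∧ ¬wB) ∧ (vB ∧ ¬vA))) := by tauto

end biasTauto

set_option maxHeartbeats 4000000 in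
/-- let `v` be a degree-two vertex of a tree `S` with neighbours
`u, w`, and let `T` be obtained from `S` by deleting `v` and adding the edge
`uw`. If `T` is upright then so is `S`. -/
theorem stmt7 {V : Type} [Fintype V] [DecidableEq V]
    (S : SimpleGraph V) (hS : S.IsTree) (v u w : V)
    (hu : S.Adj v u) (hw : S.Adj v w) (huw : u ≠ w)
    (hdeg2 : ∀ x, S.Adj v x → x = u ∨ x = w)
    (hT : Upright ((S.induce {x : V | x ≠ v}) ⊔
        SimpleGraph.fromEdgeSet
          {s((⟨u, hu.ne'⟩ : {x : V | x ≠ v}), ⟨w, hw.ne'⟩)})) :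
    Upright S := by
  classical
  intro F hF hcut
  have hvu : v ≠ u := hu.ne
  have hvw : v ≠ w := hw.ne
  have huv : u ≠ v := hu.ne'
  have hwv : w ≠ v := hw.ne'
  have hwu : w ≠ u := huw.symm
  set uu : {x : V | x ≠ v} := ⟨u, hu.ne'⟩ with huudef
  set ww : {x : V | x ≠ v} := ⟨w, hw.ne'⟩ with hwwdef
  set T := (S.induce {x : V | x ≠ v}) ⊔ SimpleGraph.fromEdgeSet {s(uu, ww)} with hTdef
  have huuww : uu ≠ ww := by
    intro h; exact huw (congrArg Subtype.val h)
  -- no edge between u and w in S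
  have hnadj : ¬ S.Adj u w := by
    intro h
    obtain ⟨p, hp, hpu⟩ := hS.existsUnique_path u w
    have h1 : (SimpleGraph.Walk.cons h SimpleGraph.Walk.nil : S.Walk u w).IsPath := by
      simp [huw]
    have h2 : (SimpleGraph.Walk.cons hu.symm
        (SimpleGraph.Walk.cons hw SimpleGraph.Walk.nil) : S.Walk u w).IsPath := by
      simp [SimpleGraph.Walk.isPath_def, huv, huw, hvw]
    have := (hpu _ h1).trans (hpu _ h2).symm
    simpa using congrArg SimpleGraph.Walk.length this
  have adjT : ∀ a b : {x : V | x ≠ v}, T.Adj a b ↔ (S.Adj ↑a ↑b ∨ s(a, b) = s(uu, ww)) := by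
    intro a b
    rw [hTdef]
    simp only [SimpleGraph.sup_adj, SimpleGraph.comap_adj, SimpleGraph.fromEdgeSet_adj,
      Set.mem_singleton_iff]
    constructor
    · rintro (h | ⟨h, _⟩)
      · exact Or.inl h
      · exact Or.inr h
    · rintro (h | h)
      · exact Or.inl h
      · refine Or.inr ⟨h, ?_⟩
        rcases Sym2.eq_iff.mp h with ⟨rfl, rfl⟩ | ⟨rfl, rfl⟩
        · exact huuww
        · exact huuww.symm
  have hTadjuuww : T.Adj uu ww := (adjT uu ww).mpr (Or.inr rfl)
  -- the lift of vertices
  let ℓ : V → {x : V | x ≠ v} := fun x => if h : x = v then uu else ⟨x, h⟩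
  have hℓ : ∀ (x : V) (h : x ≠ v), ℓ x = ⟨x, h⟩ := by
    intro x h; simp [ℓ, h]
  have hℓcoe : ∀ a : {x : V | x ≠ v}, ℓ ↑a = a := by
    intro a; rw [hℓ _ a.2]
  -- restriction of sets
  let r : Set V → Set {x : V | x ≠ v} := fun X => {y | ↑y ∈ X}
  let Bad : Set V → Prop := fun X => (v ∈ X ∧ u ∉ X ∧ w ∉ X) ∨ (v ∉ X ∧ u ∈ X ∧ w ∈ X)
  let F' : Set (Set {x : V | x ≠ v}) := {Y | ∃ X, X ∈ F ∧ ¬ Bad X ∧ r X = Y}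
  have hbias' : IsBias T F' := by
    obtain ⟨hFne, hF2, hF3⟩ := hF
    -- helpers
    have push : ∀ C : Set V, (C ∈ F ∨ C = ∅ ∨ C = Set.univ) → ¬ Bad C →
        (r C ∈ F' ∨ r C = ∅ ∨ r C = Set.univ) := by
      rintro C (hC | rfl | rfl) hnbC
      · exact Or.inl ⟨C, hC, hnbC, rfl⟩
      · exact Or.inr (Or.inl (Set.eq_empty_iff_forall_notMem.mpr (fun y h => h)))
      · exact Or.inr (Or.inr (Set.eq_univ_iff_forall.mpr (fun y => trivial)))
    have uwT : ∀ A B : Set V, ((u ∈ A \ B ∧ w ∈ B \ A) ∨ (w ∈ A \ B ∧ u ∈ B \ A)) →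
        s(uu, ww) ∈ crossEdges T (r A) (r B) := by
      intro A B h
      refine (mem_crossEdges_iff T (r A) (r B) uu ww).mpr ⟨hTadjuuww, ?_⟩
      rcases h with ⟨h1, h2⟩ | ⟨h1, h2⟩
      · exact Or.inl ⟨⟨h1.1, h1.2⟩, ⟨h2.1, h2.2⟩⟩
      · exact Or.inr ⟨⟨h1.1, h1.2⟩, ⟨h2.1, h2.2⟩⟩
    have offT : ∀ (A B : Set V) (a b : V) (ha : a ≠ v) (hb : b ≠ v), S.Adj a b →
        a ∈ A \ B → b ∈ B \ A →
        s((⟨a, ha⟩ : {x : V | x ≠ v}), ⟨b, hb⟩) ∈ crossEdges T (r A) (r B) := by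
      intro A B a b ha hb hadj h1 h2
      exact (mem_crossEdges_iff T (r A) (r B) _ _).mpr
        ⟨(adjT _ _).mpr (Or.inl hadj), Or.inl ⟨⟨h1.1, h1.2⟩, ⟨h2.1, h2.2⟩⟩⟩
    have hnoV : ∀ A B : Set V, ¬ Bad A → ¬ Bad B →
        ¬(u ∈ A \ B ∧ w ∈ B \ A) → ¬(w ∈ A \ B ∧ u ∈ B \ A) →
        ∀ b', S.Adj v b' → ¬((v ∈ A \ B ∧ b' ∈ B \ A) ∨ (b' ∈ A \ B ∧ v ∈ B \ A)) := by
      intro A B hnbA hnbB h1 h2 b' hadj h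
      have hnbA' : ¬((v ∈ A ∧ u ∉ A ∧ w ∉ A) ∨ (v ∉ A ∧ u ∈ A ∧ w ∈ A)) := hnbA
      have hnbB' : ¬((v ∈ B ∧ u ∉ B ∧ w ∉ B) ∨ (v ∉ B ∧ u ∈ B ∧ w ∈ B)) := hnbB
      simp only [Set.mem_diff] at h1 h2 h
      rcases hdeg2 b' hadj with rfl | rfl
      · exact bias_tauto3 hnbA' hnbB' h1 h2 h
      · exact bias_tauto4 hnbA' hnbB' h1 h2 h
    have nbiu : ∀ A B : Set V, ¬ Bad A → ¬ Bad B →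
        ¬(u ∈ A \ B ∧ w ∈ B \ A) → ¬(w ∈ A \ B ∧ u ∈ B \ A) →
        ¬ Bad (A ∩ B) ∧ ¬ Bad (A ∪ B) := by
      intro A B hnbA hnbB h1 h2
      have hnbA' : ¬((v ∈ A ∧ u ∉ A ∧ w ∉ A) ∨ (v ∉ A ∧ u ∈ A ∧ w ∈ A)) := hnbA
      have hnbB' : ¬((v ∈ B ∧ u ∉ B ∧ w ∉ B) ∨ (v ∉ B ∧ u ∈ B ∧ w ∈ B)) := hnbB
      simp only [Set.mem_diff] at h1 h2
      constructor
      · intro hbad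
        have hbad' : (v ∈ A ∩ B ∧ u ∉ A ∩ B ∧ w ∉ A ∩ B) ∨
            (v ∉ A ∩ B ∧ u ∈ A ∩ B ∧ w ∈ A ∩ B) := hbad
        simp only [Set.mem_inter_iff] at hbad'
        exact bias_tauto1 hnbA' hnbB' h1 h2 hbad'
      · intro hbad
        have hbad' : (v ∈ A ∪ B ∧ u ∉ A ∪ B ∧ w ∉ A ∪ B) ∨
            (v ∉ A ∪ B ∧ u ∈ A ∪ B ∧ w ∈ A ∪ B) := hbad
        simp only [Set.mem_union] at hbad'
        exact bias_tauto2 hnbA' hnbB' h1 h2 hbad'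
    refine ⟨?_, ?_, ?_⟩
    · -- nonempty / not univ
      rintro A' ⟨A, hA, hnbA, rfl⟩
      obtain ⟨hAne, hAnu⟩ := hFne A hA
      constructor
      · intro hrA
        have hsub : ∀ x ∈ A, x = v := by
          intro x hx
          by_contra hxv
          have hmem : (⟨x, hxv⟩ : {x : V | x ≠ v}) ∈ r A := hx
          rw [hrA] at hmem
          exact hmem
        obtain ⟨x, hx⟩ := Set.nonempty_iff_ne_empty.mpr hAne
        have hxv := hsub x hx
        subst hxv
        exact hnbA (Or.inl ⟨hx, fun hu' => huv (hsub u hu'), fun hw' => hwv (hsub w hw')⟩)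
      · intro hrA
        have hall : ∀ x, x ≠ v → x ∈ A := by
          intro x hxv
          have hmem : (⟨x, hxv⟩ : {x : V | x ≠ v}) ∈ r A := by rw [hrA]; trivial
          exact hmem
        have hvA : v ∉ A := by
          intro hvA
          apply hAnu
          ext x
          simp only [Set.mem_univ, iff_true]
          by_cases hx : x = v
          · exact hx ▸ hvA
          · exact hall x hx
        exact hnbA (Or.inr ⟨hvA, hall u huv, hall w hwv⟩)
    · -- empty crossing
      rintro A' ⟨A, hA, hnbA, rfl⟩ B' ⟨B, hB, hnbB, rfl⟩ hcrT
      have hUW1 : ¬(u ∈ A \ B ∧ w ∈ B \ A) := by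
        intro h
        have := uwT A B (Or.inl h)
        rw [hcrT] at this
        exact this
      have hUW2 : ¬(w ∈ A \ B ∧ u ∈ B \ A) := by
        intro h
        have := uwT A B (Or.inr h)
        rw [hcrT] at this
        exact this
      have hoffS : ∀ a b, S.Adj a b → a ≠ v → b ≠ v → ¬(a ∈ A \ B ∧ b ∈ B \ A) := by
        intro a b hadj ha hb h
        have := offT A B a b ha hb hadj h.1 h.2
        rw [hcrT] at this
        exact this
      have hnoV' := hnoV A B hnbA hnbB hUW1 hUW2
      have hcrS : crossEdges S A B = ∅ := by
        rw [crossEdges_eq_empty_iff]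
        intro a b hadj h
        by_cases ha : a = v
        · subst ha
          exact hnoV' b hadj (Or.inl h)
        · by_cases hb : b = v
          · subst hb
            exact hnoV' a hadj.symm (Or.inr ⟨h.1, h.2⟩)
          · exact hoffS a b hadj ha hb h
      obtain ⟨hint, huni⟩ := hF2 A hA B hB hcrS
      obtain ⟨hni, hnu⟩ := nbiu A B hnbA hnbB hUW1 hUW2
      exact ⟨push (A ∩ B) hint hni, push (A ∪ B) huni hnu⟩
    · -- single crossing edge
      rintro A' ⟨A, hA, hnbA, rfl⟩ B' ⟨B, hB, hnbB, rfl⟩ hcr1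
      obtain ⟨e, he⟩ := Set.ncard_eq_one.mp hcr1
      by_cases huwmem : s(uu, ww) ∈ crossEdges T (r A) (r B)
      · -- the unique crossing edge of T is uw
        have hoff : ∀ a b, S.Adj a b → a ≠ v → b ≠ v → ¬(a ∈ A \ B ∧ b ∈ B \ A) := by
          intro a b hadj ha hb hcross
          have hm := offT A B a b ha hb hadj hcross.1 hcross.2
          rw [he, Set.mem_singleton_iff] at hm huwmem
          have heq : s((⟨a, ha⟩ : {x : V | x ≠ v}), ⟨b, hb⟩) = s(uu, ww) :=
            hm.trans huwmem.symm
          rcases Sym2.eq_iff.mp heq with ⟨k1, k2⟩ | ⟨k1, k2⟩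
          · have ka : a = u := congrArg Subtype.val k1
            have kb : b = w := congrArg Subtype.val k2
            rw [ka, kb] at hadj
            exact hnadj hadj
          · have ka : a = w := congrArg Subtype.val k1
            have kb : b = u := congrArg Subtype.val k2
            rw [ka, kb] at hadj
            exact hnadj hadj.symm
        have hcro' : (u ∈ A \ B ∧ w ∈ B \ A) ∨ (w ∈ A \ B ∧ u ∈ B \ A) := by
          have hcro := (mem_crossEdges_iff T (r A) (r B) uu ww).mp huwmem
          rcases hcro.2 with ⟨k1, k2⟩ | ⟨k1, k2⟩
          · exact Or.inl ⟨⟨k1.1, k1.2⟩, ⟨k2.1, k2.2⟩⟩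
          · exact Or.inr ⟨⟨k1.1, k1.2⟩, ⟨k2.1, k2.2⟩⟩
        have main : ∀ A B : Set V, A ∈ F → B ∈ F → ¬ Bad A → ¬ Bad B →
            (∀ a b, S.Adj a b → a ≠ v → b ≠ v → ¬(a ∈ A \ B ∧ b ∈ B \ A)) →
            u ∈ A \ B → w ∈ B \ A →
            ((A ∩ B ∈ F ∨ A ∩ B = ∅ ∨ A ∩ B = Set.univ) ∧ ¬ Bad (A ∩ B)) ∨
            ((A ∪ B ∈ F ∨ A ∪ B = ∅ ∨ A ∪ B = Set.univ) ∧ ¬ Bad (A ∪ B)) := by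
          intro A B hA hB hnbA hnbB hoff hu1 hw1
          have hnbA' : ¬((v ∈ A ∧ u ∉ A ∧ w ∉ A) ∨ (v ∉ A ∧ u ∈ A ∧ w ∈ A)) := hnbA
          have hnbB' : ¬((v ∈ B ∧ u ∉ B ∧ w ∉ B) ∨ (v ∉ B ∧ u ∈ B ∧ w ∈ B)) := hnbB
          by_cases hvA : v ∈ A
          · by_cases hvB : v ∈ B
            · -- v ∈ A ∩ B : no crossing in S
              have hcrS : crossEdges S A B = ∅ := by
                rw [crossEdges_eq_empty_iff]
                intro a b hadj h
                by_cases ha : a = v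
                · subst ha
                  exact h.1.2 hvB
                · by_cases hb : b = v
                  · subst hb
                    exact h.2.2 hvA
                  · exact hoff a b hadj ha hb h
              refine Or.inr ⟨(hF2 A hA B hB hcrS).2, ?_⟩
              rintro (⟨-, hnu, -⟩ | ⟨hnv, -, -⟩)
              · exact hnu (Or.inl hu1.1)
              · exact hnv (Or.inl hvA)
            · -- v ∈ A \ B : crossing edge of S is exactly s(v,w)
              have hcrS : crossEdges S A B = {s(v, w)} := by
                ext e'
                constructor
                · intro he'
                  obtain ⟨a, b, rfl, hadj, h1, h2⟩ := crossEdges_elim he'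
                  by_cases ha : a = v
                  · subst ha
                    rcases hdeg2 b hadj with rfl | rfl
                    · exact absurd h2.1 hu1.2
                    · exact Set.mem_singleton _
                  · by_cases hb : b = v
                    · subst hb
                      exact absurd h2.1 hvB
                    · exact absurd ⟨h1, h2⟩ (hoff a b hadj ha hb)
                · intro he'
                  rw [Set.mem_singleton_iff] at he'
                  subst he'
                  exact (mem_crossEdges_iff S A B v w).mpr
                    ⟨hw, Or.inl ⟨⟨hvA, hvB⟩, hw1⟩⟩
              have hcr1' : (crossEdges S A B).ncard = 1 := by
                rw [hcrS]; exact Set.ncard_singleton _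
              rcases hF3 A hA B hB hcr1' with h | h
              · refine Or.inl ⟨h, ?_⟩
                rintro (⟨⟨-, hvB'⟩, -, -⟩ | ⟨-, ⟨-, huB'⟩, -⟩)
                · exact hvB hvB'
                · exact hu1.2 huB'
              · refine Or.inr ⟨h, ?_⟩
                rintro (⟨-, hnu, -⟩ | ⟨hnv, -, -⟩)
                · exact hnu (Or.inl hu1.1)
                · exact hnv (Or.inl hvA)
          · by_cases hvB : v ∈ B
            · -- v ∈ B \ A : crossing edge of S is exactly s(u,v)
              have hcrS : crossEdges S A B = {s(u, v)} := by
                ext e'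
                constructor
                · intro he'
                  obtain ⟨a, b, rfl, hadj, h1, h2⟩ := crossEdges_elim he'
                  by_cases ha : a = v
                  · subst ha
                    exact absurd h1.1 hvA
                  · by_cases hb : b = v
                    · subst hb
                      rcases hdeg2 a hadj.symm with rfl | rfl
                      · exact Set.mem_singleton _
                      · exact absurd hw1.1 h1.2
                    · exact absurd ⟨h1, h2⟩ (hoff a b hadj ha hb)
                · intro he'
                  rw [Set.mem_singleton_iff] at he'
                  subst he'
                  exact (mem_crossEdges_iff S A B u v).mpr
                    ⟨hu.symm, Or.inl ⟨hu1, ⟨hvB, hvA⟩⟩⟩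
              have hcr1' : (crossEdges S A B).ncard = 1 := by
                rw [hcrS]; exact Set.ncard_singleton _
              rcases hF3 A hA B hB hcr1' with h | h
              · refine Or.inl ⟨h, ?_⟩
                rintro (⟨⟨hvA', -⟩, -, -⟩ | ⟨-, ⟨-, huB'⟩, -⟩)
                · exact hvA hvA'
                · exact hu1.2 huB'
              · refine Or.inr ⟨h, ?_⟩
                rintro (⟨-, hnu, -⟩ | ⟨hnv, -, -⟩)
                · exact hnu (Or.inl hu1.1)
                · exact hnv (Or.inr hvB)
            · -- v ∉ A ∪ B : no crossing in S
              have hcrS : crossEdges S A B = ∅ := by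
                rw [crossEdges_eq_empty_iff]
                intro a b hadj h
                by_cases ha : a = v
                · subst ha
                  exact hvA h.1.1
                · by_cases hb : b = v
                  · subst hb
                    exact hvB h.2.1
                  · exact hoff a b hadj ha hb h
              refine Or.inl ⟨(hF2 A hA B hB hcrS).1, ?_⟩
              rintro (⟨⟨hvA', -⟩, -, -⟩ | ⟨-, ⟨-, huB'⟩, -⟩)
              · exact hvA hvA'
              · exact hu1.2 huB'
        rcases hcro' with ⟨h1, h2⟩ | ⟨h1, h2⟩
        · rcases main A B hA hB hnbA hnbB hoff h1 h2 with ⟨hm, hn⟩ | ⟨hm, hn⟩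
          · exact Or.inl (push (A ∩ B) hm hn)
          · exact Or.inr (push (A ∪ B) hm hn)
        · have hoff' : ∀ a b, S.Adj a b → a ≠ v → b ≠ v → ¬(a ∈ B \ A ∧ b ∈ A \ B) :=
            fun a b hadj ha hb h => hoff b a hadj.symm hb ha ⟨h.2, h.1⟩
          rcases main B A hB hA hnbB hnbA hoff' h2 h1 with ⟨hm, hn⟩ | ⟨hm, hn⟩
          · rw [Set.inter_comm B A] at hm hn
            exact Or.inl (push (A ∩ B) hm hn)
          · rw [Set.union_comm B A] at hm hn
            exact Or.inr (push (A ∪ B) hm hn)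
      · -- the unique crossing edge of T is an edge of S avoiding v
        have hUW1 : ¬(u ∈ A \ B ∧ w ∈ B \ A) := fun h => huwmem (uwT A B (Or.inl h))
        have hUW2 : ¬(w ∈ A \ B ∧ u ∈ B \ A) := fun h => huwmem (uwT A B (Or.inr h))
        have hee : e ∈ crossEdges T (r A) (r B) := by rw [he]; exact Set.mem_singleton _
        obtain ⟨a', b', rfl, hadjT, h1, h2⟩ := crossEdges_elim hee
        have hadj : S.Adj ↑a' ↑b' := by
          rcases (adjT a' b').mp hadjT with hadj | hequw
          · exact hadj
          · exfalso
            apply huwmem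
            rw [he]
            exact Set.mem_singleton_iff.mpr hequw.symm
        have hnoV' := hnoV A B hnbA hnbB hUW1 hUW2
        have hcrS : crossEdges S A B = {s((a' : V), (b' : V))} := by
          ext e'
          constructor
          · intro he'
            obtain ⟨a, b, rfl, hadj2, hh1, hh2⟩ := crossEdges_elim he'
            by_cases ha : a = v
            · subst ha
              exact absurd (Or.inl ⟨hh1, hh2⟩) (hnoV' b hadj2)
            · by_cases hb : b = v
              · subst hb
                exact absurd (Or.inr ⟨hh1, hh2⟩) (hnoV' a hadj2.symm)
              · have hm := offT A B a b ha hb hadj2 hh1 hh2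
                rw [he, Set.mem_singleton_iff] at hm
                rcases Sym2.eq_iff.mp hm with ⟨k1, k2⟩ | ⟨k1, k2⟩
                · have ka : a = ↑a' := congrArg Subtype.val k1
                  have kb : b = ↑b' := congrArg Subtype.val k2
                  rw [ka, kb]
                  exact Set.mem_singleton _
                · have ka : a = ↑b' := congrArg Subtype.val k1
                  have kb : b = ↑a' := congrArg Subtype.val k2
                  rw [ka, kb]
                  exact Set.mem_singleton_iff.mpr Sym2.eq_swap
          · intro he'
            rw [Set.mem_singleton_iff] at he'
            subst he'
            exact (mem_crossEdges_iff S A B _ _).mpr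
              ⟨hadj, Or.inl ⟨⟨h1.1, h1.2⟩, ⟨h2.1, h2.2⟩⟩⟩
        have hcr1' : (crossEdges S A B).ncard = 1 := by
          rw [hcrS]; exact Set.ncard_singleton _
        obtain ⟨hni, hnu⟩ := nbiu A B hnbA hnbB hUW1 hUW2
        rcases hF3 A hA B hB hcr1' with h | h
        · exact Or.inl (push (A ∩ B) h hni)
        · exact Or.inr (push (A ∪ B) h hnu)
  have hcut' : ∀ Y ∈ F', 2 ≤ (cutEdges T Y).ncard := by
    rintro Y ⟨X, hX, hnb, rfl⟩
    have hnb' : ¬((v ∈ X ∧ u ∉ X ∧ w ∉ X) ∨ (v ∉ X ∧ u ∈ X ∧ w ∈ X)) := hnb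
    have h2X : 2 ≤ (cutEdges S X).ncard := hcut X hX
    have hfinS : (cutEdges S X).Finite := Set.toFinite _
    have hfinT : (cutEdges T (r X)).Finite := Set.toFinite _
    have hvedge : ∀ e ∈ cutEdges S X, e ≠ s(v, u) → e ≠ s(v, w) →
        ∃ (a b : V) (ha : a ≠ v) (hb : b ≠ v),
          e = s(a, b) ∧ a ∈ X ∧ b ∉ X ∧ S.Adj a b := by
      intro e he h1 h2
      obtain ⟨a, b, rfl, hadj, haX, hbX⟩ := cutEdges_elim he
      have ha : a ≠ v := by
        rintro rfl
        rcases hdeg2 b hadj with rfl | rfl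
        · exact h1 rfl
        · exact h2 rfl
      have hb : b ≠ v := by
        rintro rfl
        rcases hdeg2 a hadj.symm with rfl | rfl
        · exact h1 Sym2.eq_swap
        · exact h2 Sym2.eq_swap
      exact ⟨a, b, ha, hb, rfl, haX, hbX, hadj⟩
    have hliftmem : ∀ (a b : V) (ha : a ≠ v) (hb : b ≠ v), S.Adj a b → a ∈ X → b ∉ X →
        s((⟨a, ha⟩ : {x : V | x ≠ v}), ⟨b, hb⟩) ∈ cutEdges T (r X) := by
      intro a b ha hb hadj haX hbX
      exact (mem_cutEdges_iff T (r X) _ _).mpr ⟨(adjT _ _).mpr (Or.inl hadj), Or.inl ⟨haX, hbX⟩⟩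
    have hliftne : ∀ (a b : V) (ha : a ≠ v) (hb : b ≠ v), S.Adj a b →
        s((⟨a, ha⟩ : {x : V | x ≠ v}), ⟨b, hb⟩) ≠ s(uu, ww) := by
      intro a b ha hb hadj heq
      rcases Sym2.eq_iff.mp heq with ⟨h1, h2⟩ | ⟨h1, h2⟩
      · have ha' : a = u := congrArg Subtype.val h1
        have hb' : b = w := congrArg Subtype.val h2
        rw [ha', hb'] at hadj
        exact hnadj hadj
      · have ha' : a = w := congrArg Subtype.val h1
        have hb' : b = u := congrArg Subtype.val h2
        rw [ha', hb'] at hadj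
        exact hnadj hadj.symm
    obtain ⟨e1, he1, e2, he2, hne⟩ := (Set.one_lt_ncard hfinS).mp (by omega)
    by_cases h1 : s(v, u) ∈ cutEdges S X
    · by_cases h2 : s(v, w) ∈ cutEdges S X
      · -- both v-edges cut : X is bad, contradiction
        exfalso
        obtain ⟨-, hsp1⟩ := (mem_cutEdges_iff S X v u).mp h1
        obtain ⟨-, hsp2⟩ := (mem_cutEdges_iff S X v w).mp h2
        tauto
      · -- only s(v,u) : uw is split
        obtain ⟨-, hsp1⟩ := (mem_cutEdges_iff S X v u).mp h1
        have hsp2 : ¬((v ∈ X ∧ w ∉ X) ∨ (w ∈ X ∧ v ∉ X)) := by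
          intro hc
          exact h2 ((mem_cutEdges_iff S X v w).mpr ⟨hw, hc⟩)
        have huwmem : s(uu, ww) ∈ cutEdges T (r X) := by
          refine (mem_cutEdges_iff T (r X) uu ww).mpr ⟨hTadjuuww, ?_⟩
          show (u ∈ X ∧ w ∉ X) ∨ (w ∈ X ∧ u ∉ X)
          tauto
        obtain ⟨e0, he0, hne0⟩ : ∃ e0 ∈ cutEdges S X, e0 ≠ s(v, u) := by
          by_cases hc : e1 = s(v, u)
          · exact ⟨e2, he2, by rw [← hc]; exact fun hh => hne hh.symm⟩
          · exact ⟨e1, he1, hc⟩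
        have hne0' : e0 ≠ s(v, w) := by rintro rfl; exact h2 he0
        obtain ⟨a, b, ha, hb, rfl, haX, hbX, hadj⟩ := hvedge e0 he0 hne0 hne0'
        refine (Set.one_lt_ncard hfinT).mpr
          ⟨_, hliftmem a b ha hb hadj haX hbX, _, huwmem, hliftne a b ha hb hadj⟩
    · by_cases h2 : s(v, w) ∈ cutEdges S X
      · -- only s(v,w) : uw is split
        obtain ⟨-, hsp2⟩ := (mem_cutEdges_iff S X v w).mp h2
        have hsp1 : ¬((v ∈ X ∧ u ∉ X) ∨ (u ∈ X ∧ v ∉ X)) := by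
          intro hc
          exact h1 ((mem_cutEdges_iff S X v u).mpr ⟨hu, hc⟩)
        have huwmem : s(uu, ww) ∈ cutEdges T (r X) := by
          refine (mem_cutEdges_iff T (r X) uu ww).mpr ⟨hTadjuuww, ?_⟩
          show (u ∈ X ∧ w ∉ X) ∨ (w ∈ X ∧ u ∉ X)
          tauto
        obtain ⟨e0, he0, hne0⟩ : ∃ e0 ∈ cutEdges S X, e0 ≠ s(v, w) := by
          by_cases hc : e1 = s(v, w)
          · exact ⟨e2, he2, by rw [← hc]; exact fun hh => hne hh.symm⟩
          · exact ⟨e1, he1, hc⟩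
        have hne0' : e0 ≠ s(v, u) := by rintro rfl; exact h1 he0
        obtain ⟨a, b, ha, hb, rfl, haX, hbX, hadj⟩ := hvedge e0 he0 hne0' hne0
        refine (Set.one_lt_ncard hfinT).mpr
          ⟨_, hliftmem a b ha hb hadj haX hbX, _, huwmem, hliftne a b ha hb hadj⟩
      · -- no v-edge is cut : two off-v cut edges lift to distinct T-cut edges
        have hne1 : e1 ≠ s(v, u) := by rintro rfl; exact h1 he1
        have hne1' : e1 ≠ s(v, w) := by rintro rfl; exact h2 he1
        have hne2 : e2 ≠ s(v, u) := by rintro rfl; exact h1 he2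
        have hne2' : e2 ≠ s(v, w) := by rintro rfl; exact h2 he2
        obtain ⟨a, b, ha, hb, rfl, haX, hbX, hadj⟩ := hvedge e1 he1 hne1 hne1'
        obtain ⟨c, d, hc, hd, rfl, hcX, hdX, hadj2⟩ := hvedge e2 he2 hne2 hne2'
        refine (Set.one_lt_ncard hfinT).mpr
          ⟨_, hliftmem a b ha hb hadj haX hbX, _, hliftmem c d hc hd hadj2 hcX hdX, ?_⟩
        intro heq
        apply hne
        rcases Sym2.eq_iff.mp heq with ⟨hh1, hh2⟩ | ⟨hh1, hh2⟩
        · have h1' : a = c := congrArg Subtype.val hh1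
          have h2' : b = d := congrArg Subtype.val hh2
          subst h1'; subst h2'; rfl
        · have h1' : a = d := congrArg Subtype.val hh1
          have h2' : b = c := congrArg Subtype.val hh2
          subst h1'; subst h2'; exact Sym2.eq_swap
  obtain ⟨D', hD'dir, hD'F⟩ := hT F' hbias' hcut'
  obtain ⟨hD'1, hD'2⟩ := hD'dir
  set D : V → V → Prop := fun a b =>
    (a = u ∧ b = v ∧ D' uu ww) ∨ (a = v ∧ b = w ∧ D' uu ww) ∨
    (a = w ∧ b = v ∧ D' ww uu) ∨ (a = v ∧ b = u ∧ D' ww uu) ∨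
    (a ≠ v ∧ b ≠ v ∧ S.Adj a b ∧ D' (ℓ a) (ℓ b)) with hDdef
  have hDuv : D u v ↔ D' uu ww := by simp [hDdef, huv, huw, hwv]
  have hDvw : D v w ↔ D' uu ww := by simp [hDdef, hvu, hvw, hwv, hwu]
  have hDwv : D w v ↔ D' ww uu := by simp [hDdef, hwu, hwv, hvu]
  have hDvu : D v u ↔ D' ww uu := by simp [hDdef, hvu, hvw, huv, huw]
  have hDoff : ∀ (a b : V) (ha : a ≠ v) (hb : b ≠ v),
      D a b ↔ (S.Adj a b ∧ D' ⟨a, ha⟩ ⟨b, hb⟩) := by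
    intro a b ha hb
    rw [hDdef]
    simp only [hℓ a ha, hℓ b hb]
    constructor
    · rintro (⟨rfl, rfl, h⟩ | ⟨rfl, _⟩ | ⟨rfl, rfl, h⟩ | ⟨rfl, _⟩ | ⟨_, _, h1, h2⟩)
      · exact absurd rfl hb
      · exact absurd rfl ha
      · exact absurd rfl hb
      · exact absurd rfl ha
      · exact ⟨h1, h2⟩
    · rintro ⟨h1, h2⟩
      exact Or.inr (Or.inr (Or.inr (Or.inr ⟨ha, hb, h1, h2⟩)))
  have hexcl : D' uu ww ↔ ¬ D' ww uu := hD'2 uu ww hTadjuuww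
  refine ⟨D, ⟨?_, ?_⟩, ?_⟩
  · -- D a b → S.Adj a b
    rintro a b (⟨rfl, rfl, _⟩ | ⟨rfl, rfl, _⟩ | ⟨rfl, rfl, _⟩ | ⟨rfl, rfl, _⟩ | ⟨_, _, h, _⟩)
    · exact hu.symm
    · exact hw
    · exact hw.symm
    · exact hu
    · exact h
  · -- exactly one direction
    intro a b hab
    by_cases ha : a = v
    · subst ha
      rcases hdeg2 b hab with rfl | rfl
      · rw [hDvu, hDuv]
        rw [hD'2 ww uu hTadjuuww.symm]
      · rw [hDvw, hDwv, hexcl]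
    · by_cases hb : b = v
      · subst hb
        rcases hdeg2 a hab.symm with rfl | rfl
        · rw [hDuv, hDvu, hexcl]
        · rw [hDwv, hDvw]
          rw [hD'2 ww uu hTadjuuww.symm]
      · rw [hDoff a b ha hb, hDoff b a hb ha]
        have hadjT : T.Adj ⟨a, ha⟩ ⟨b, hb⟩ := (adjT _ _).mpr (Or.inl hab)
        have := hD'2 _ _ hadjT
        constructor
        · rintro ⟨h1, h2⟩ ⟨h3, h4⟩
          exact (this.mp h2) h4
        · intro h
          refine ⟨hab, ?_⟩
          rw [this]
          intro h4
          exact h ⟨hab.symm, h4⟩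
  · -- in/out for every X ∈ F
    intro X hX
    by_cases hbad : Bad X
    · rcases hbad with ⟨hvX, huX, hwX⟩ | ⟨hvX, huX, hwX⟩
      · by_cases hd : D' uu ww
        · have t1 : D v w := hDvw.mpr hd
          have t2 : D u v := hDuv.mpr hd
          exact ⟨⟨v, hvX, w, hwX, t1⟩, ⟨u, huX, v, hvX, t2⟩⟩
        · have hd' : D' ww uu := by rw [hexcl, not_not] at hd; exact hd
          exact ⟨⟨v, hvX, u, huX, hDvu.mpr hd'⟩, ⟨w, hwX, v, hvX, hDwv.mpr hd'⟩⟩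
      · by_cases hd : D' uu ww
        · exact ⟨⟨u, huX, v, hvX, hDuv.mpr hd⟩, ⟨v, hvX, w, hwX, hDvw.mpr hd⟩⟩
        · have hd' : D' ww uu := by rw [hexcl, not_not] at hd; exact hd
          exact ⟨⟨w, hwX, v, hvX, hDwv.mpr hd'⟩, ⟨v, hvX, u, huX, hDvu.mpr hd'⟩⟩
    · obtain ⟨hout, hin⟩ := hD'F (r X) ⟨X, hX, hbad, rfl⟩
      constructor
      · obtain ⟨a', ha'X, b', hb'X, hd⟩ := hout
        rcases (adjT a' b').mp (hD'1 _ _ hd) with hadj | heq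
        · refine ⟨↑a', ha'X, ↑b', hb'X, ?_⟩
          rw [hDoff _ _ a'.2 b'.2]
          exact ⟨hadj, by simpa using hd⟩
        · rcases Sym2.eq_iff.mp heq with ⟨rfl, rfl⟩ | ⟨rfl, rfl⟩
          · -- D' uu ww, u ∈ X, w ∉ X
            by_cases hvX : v ∈ X
            · exact ⟨v, hvX, w, hb'X, hDvw.mpr hd⟩
            · exact ⟨u, ha'X, v, hvX, hDuv.mpr hd⟩
          · -- D' ww uu, w ∈ X, u ∉ X
            by_cases hvX : v ∈ X
            · exact ⟨v, hvX, u, hb'X, hDvu.mpr hd⟩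
            · exact ⟨w, ha'X, v, hvX, hDwv.mpr hd⟩
      · obtain ⟨a', ha'X, b', hb'X, hd⟩ := hin
        rcases (adjT a' b').mp (hD'1 _ _ hd) with hadj | heq
        · refine ⟨↑a', ha'X, ↑b', hb'X, ?_⟩
          rw [hDoff _ _ a'.2 b'.2]
          exact ⟨hadj, by simpa using hd⟩
        · rcases Sym2.eq_iff.mp heq with ⟨rfl, rfl⟩ | ⟨rfl, rfl⟩
          · -- D' uu ww, u ∉ X, w ∈ X
            by_cases hvX : v ∈ X
            · exact ⟨u, ha'X, v, hvX, hDuv.mpr hd⟩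
            · exact ⟨v, hvX, w, hb'X, hDvw.mpr hd⟩
          · -- D' ww uu, w ∉ X, u ∈ X
            by_cases hvX : v ∈ X
            · exact ⟨w, ha'X, v, hvX, hDwv.mpr hd⟩
            · exact ⟨v, hvX, u, hb'X, hDvu.mpr hd⟩
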